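/- Let N ∈ ℕ, Q_1,…,Q_N, E_1,…,E_{N−1} > 0, and let S : ℝ → ℝ be the path encoding: S is piecewise linear with S(0) = 0, slope −1 on each interval O_n = [Σ_{k<n}(Q_k+E_k), Σ_{k<n}(Q_k+E_k) + Q_n] for 1 ≤ n ≤ N, and slope +1 elsewhere. Writing a_n, b_n for the left and right endpoints of O_n and M(x) = sup_{y≤x} S(y), it holds for each 1 ≤ n ≤ N that M(b_n) − S(b_n) = Σ_{k=1}^n Q_k − Σ_{k=1}^{n−1} (𝒯Q)_k, where (𝒯Q)_k = min{ Σ_{j=1}^k Q_j − Σ_{j=1}^{k−1}(𝒯Q)_j , E_k }. -/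

import Mathlib

/-- Left endpoint of the `n`th slope `-1` interval of the path encoding. -/
noncomputable def aPt (Q E : ℕ → ℝ) (n : ℕ) : ℝ :=
  ∑ k ∈ Finset.Icc 1 (n - 1), (Q k + E k)

/-- Right endpoint of the `n`th slope `-1` interval of the path encoding. -/
noncomputable def bPt (Q E : ℕ → ℝ) (n : ℕ) : ℝ := aPt Q E n + Q n

/-- The union of the slope `-1` intervals. -/
def ballSet (N : ℕ) (Q E : ℕ → ℝ) : Set ℝ :=
  ⋃ n ∈ Finset.Icc 1 N, Set.Icc (aPt Q E n) (bPt Q E n)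

/-- The path encoding of the configuration `((Q_n)_{n=1}^N, (E_n)_{n=1}^{N-1})`. -/
noncomputable def pathEnc (N : ℕ) (Q E : ℕ → ℝ) (x : ℝ) : ℝ :=
  ∫ y in (0:ℝ)..x, (1 - 2 * Set.indicator (ballSet N Q E) (fun _ => (1:ℝ)) y)

noncomputable def pastMax (S : ℝ → ℝ) (x : ℝ) : ℝ := sSup (S '' Set.Iic x)

open MeasureTheory Set

section Aux

lemma measurable_ballSet (N : ℕ) (Q E : ℕ → ℝ) : MeasurableSet (ballSet N Q E) :=
  (Finset.Icc 1 N).measurableSet_biUnion fun _ _ => measurableSet_Icc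

lemma intInt (N : ℕ) (Q E : ℕ → ℝ) (a b : ℝ) :
    IntervalIntegrable (fun y => 1 - 2 * Set.indicator (ballSet N Q E) (fun _ => (1:ℝ)) y)
      volume a b := by
  apply IntervalIntegrable.sub intervalIntegrable_const
  apply IntervalIntegrable.const_mul
  rw [intervalIntegrable_iff]
  exact (integrableOn_const measure_Ioc_lt_top.ne).indicator (measurable_ballSet N Q E)

lemma pe_sub (N : ℕ) (Q E : ℕ → ℝ) (c d : ℝ) :
    pathEnc N Q E d = pathEnc N Q E c +
      ∫ y in c..d, (1 - 2 * Set.indicator (ballSet N Q E) (fun _ => (1:ℝ)) y) := by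
  rw [pathEnc, pathEnc,
    intervalIntegral.integral_add_adjacent_intervals (intInt N Q E 0 c) (intInt N Q E c d)]

lemma pe_up (N : ℕ) (Q E : ℕ → ℝ) {c d : ℝ} (hcd : c ≤ d)
    (h : ∀ y ∈ Set.Ioo c d, y ∉ ballSet N Q E) :
    pathEnc N Q E d = pathEnc N Q E c + (d - c) := by
  rw [pe_sub N Q E c d]
  congr 1
  have : (∫ y in c..d, (1 - 2 * Set.indicator (ballSet N Q E) (fun _ => (1:ℝ)) y))
      = ∫ y in c..d, (1:ℝ) := by
    apply intervalIntegral.integral_congr_ae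
    have hd : ∀ᵐ y : ℝ, y ∉ ({d} : Set ℝ) :=
      (MeasureTheory.measure_eq_zero_iff_ae_notMem (μ := volume)).1 (Real.volume_singleton)
    filter_upwards [hd] with y hy hmem
    rw [Set.uIoc_of_le hcd] at hmem
    have : y ∈ Set.Ioo c d := ⟨hmem.1, lt_of_le_of_ne hmem.2 (by simpa using hy)⟩
    rw [Set.indicator_of_notMem (h y this)]
    ring
  rw [this, intervalIntegral.integral_const, smul_eq_mul, mul_one]

lemma pe_down (N : ℕ) (Q E : ℕ → ℝ) {c d : ℝ} (hcd : c ≤ d)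
    (h : Set.Ioo c d ⊆ ballSet N Q E) :
    pathEnc N Q E d = pathEnc N Q E c - (d - c) := by
  rw [pe_sub N Q E c d]
  have : (∫ y in c..d, (1 - 2 * Set.indicator (ballSet N Q E) (fun _ => (1:ℝ)) y))
      = ∫ y in c..d, (-1:ℝ) := by
    apply intervalIntegral.integral_congr_ae
    have hd : ∀ᵐ y : ℝ, y ∉ ({d} : Set ℝ) :=
      (MeasureTheory.measure_eq_zero_iff_ae_notMem (μ := volume)).1 (Real.volume_singleton)
    filter_upwards [hd] with y hy hmem
    rw [Set.uIoc_of_le hcd] at hmem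
    have hyo : y ∈ Set.Ioo c d := ⟨hmem.1, lt_of_le_of_ne hmem.2 (by simpa using hy)⟩
    rw [Set.indicator_of_mem (h hyo)]
    ring
  rw [this, intervalIntegral.integral_const, smul_eq_mul]
  ring

variable (N : ℕ) (Q E : ℕ → ℝ)
    (hQ0 : ∀ n, 1 ≤ n → n ≤ N → 0 ≤ Q n)
    (hE0 : ∀ n, 1 ≤ n → n ≤ N - 1 → 0 ≤ E n)

lemma aPt_one : aPt Q E 1 = 0 := by simp [aPt]

lemma aPt_succ (m : ℕ) (hm : 1 ≤ m) : aPt Q E (m + 1) = bPt Q E m + E m := by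
  obtain ⟨j, rfl⟩ : ∃ j, m = j + 1 := ⟨m - 1, by omega⟩
  rw [aPt, bPt, aPt]
  simp only [Nat.add_sub_cancel]
  rw [Finset.sum_Icc_succ_top (by omega : 1 ≤ j + 1)]
  ring

include hQ0 hE0

lemma aPt_mono {i j : ℕ} (hi : 1 ≤ i) (hij : i ≤ j) (hj : j ≤ N) :
    aPt Q E i ≤ aPt Q E j := by
  apply Finset.sum_le_sum_of_subset_of_nonneg
  · exact Finset.Icc_subset_Icc le_rfl (by omega)
  · intro k hk _
    have hk1 : 1 ≤ k := (Finset.mem_Icc.1 hk).1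
    have hk2 : k ≤ j - 1 := (Finset.mem_Icc.1 hk).2
    have := hQ0 k hk1 (by omega)
    have := hE0 k hk1 (by omega)
    linarith

omit hE0 in
lemma aPt_le_bPt {m : ℕ} (hm : 1 ≤ m) (hmN : m ≤ N) : aPt Q E m ≤ bPt Q E m := by
  have := hQ0 m hm hmN
  simp only [bPt]; linarith

lemma bPt_mono {i j : ℕ} (hi : 1 ≤ i) (hij : i ≤ j) (hj : j ≤ N) :
    bPt Q E i ≤ bPt Q E j := by
  rcases eq_or_lt_of_le hij with rfl | hlt
  · exact le_rfl
  · calc bPt Q E i ≤ aPt Q E (i + 1) := by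
          rw [aPt_succ Q E i hi]
          have := hE0 i hi (by omega)
          linarith
      _ ≤ aPt Q E j := aPt_mono N Q E hQ0 hE0 (by omega) (by omega) hj
      _ ≤ bPt Q E j := aPt_le_bPt N Q E hQ0 (by omega) hj

lemma aPt_nonneg {m : ℕ} (hm : 1 ≤ m) (hmN : m ≤ N) : 0 ≤ aPt Q E m := by
  have := aPt_mono N Q E hQ0 hE0 (le_refl 1) hm hmN
  rwa [aPt_one] at this

lemma gap_disjoint {m : ℕ} (hm : 1 ≤ m) (hmN : m ≤ N - 1) :
    ∀ y ∈ Set.Ioo (bPt Q E m) (aPt Q E (m + 1)), y ∉ ballSet N Q E := by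
  intro y hy hball
  simp only [ballSet, Set.mem_iUnion, Finset.mem_Icc] at hball
  obtain ⟨j, ⟨hj1, hjN⟩, hyj⟩ := hball
  rcases le_or_gt j m with hjm | hjm
  · have : bPt Q E j ≤ bPt Q E m := bPt_mono N Q E hQ0 hE0 hj1 hjm (by omega)
    have := hyj.2
    have := hy.1
    linarith
  · have : aPt Q E (m + 1) ≤ aPt Q E j := aPt_mono N Q E hQ0 hE0 (by omega) hjm hjN
    have := hyj.1
    have := hy.2
    linarith

lemma neg_disjoint : ∀ y ∈ Set.Ioo (c : ℝ) 0, c ≤ 0 → y ∉ ballSet N Q E := by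
  intro y hy _ hball
  simp only [ballSet, Set.mem_iUnion, Finset.mem_Icc] at hball
  obtain ⟨j, ⟨hj1, hjN⟩, hyj⟩ := hball
  have := aPt_nonneg N Q E hQ0 hE0 hj1 hjN
  have := hyj.1
  have := hy.2
  linarith

omit hQ0 hE0 in
lemma ivl_subset {m : ℕ} (hm : 1 ≤ m) (hmN : m ≤ N) :
    Set.Icc (aPt Q E m) (bPt Q E m) ⊆ ballSet N Q E := by
  intro y hy
  simp only [ballSet, Set.mem_iUnion, Finset.mem_Icc]
  exact ⟨m, ⟨hm, hmN⟩, hy⟩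

end Aux

theorem toda_carrier_eq_max_minus_path (N : ℕ) (hN : 1 ≤ N) (Q E TQ : ℕ → ℝ)
    (hQ : ∀ n, 1 ≤ n → n ≤ N → 0 < Q n)
    (hE : ∀ n, 1 ≤ n → n ≤ N - 1 → 0 < E n)
    (hTQ : ∀ n, 1 ≤ n → n ≤ N - 1 →
      TQ n = min ((∑ k ∈ Finset.Icc 1 n, Q k) - ∑ k ∈ Finset.Icc 1 (n - 1), TQ k) (E n))
    (hTQN : TQ N = (∑ k ∈ Finset.Icc 1 N, Q k) - ∑ k ∈ Finset.Icc 1 (N - 1), TQ k) :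
    ∀ n, 1 ≤ n → n ≤ N →
      pastMax (pathEnc N Q E) (bPt Q E n) - pathEnc N Q E (bPt Q E n) =
        (∑ k ∈ Finset.Icc 1 n, Q k) - ∑ k ∈ Finset.Icc 1 (n - 1), TQ k := by
  have hQ0 : ∀ n, 1 ≤ n → n ≤ N → 0 ≤ Q n := fun n h1 h2 => (hQ n h1 h2).le
  have hE0 : ∀ n, 1 ≤ n → n ≤ N - 1 → 0 ≤ E n := fun n h1 h2 => (hE n h1 h2).le
  have S0 : pathEnc N Q E 0 = 0 := intervalIntegral.integral_same
  set R : ℕ → ℝ := fun n => (∑ k ∈ Finset.Icc 1 n, Q k) - ∑ k ∈ Finset.Icc 1 (n - 1), TQ k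
    with hRdef
  suffices key : ∀ n, 1 ≤ n → n ≤ N →
      IsGreatest (pathEnc N Q E '' Set.Iic (bPt Q E n)) (pathEnc N Q E (bPt Q E n) + R n) by
    intro n h1 h2
    have h := (key n h1 h2).csSup_eq
    show sSup (pathEnc N Q E '' Set.Iic (bPt Q E n)) - pathEnc N Q E (bPt Q E n) = R n
    rw [h]; ring
  intro n h1
  induction n, h1 using Nat.le_induction with
  | base =>
    intro _
    have hb1 : bPt Q E 1 = Q 1 := by rw [bPt, aPt_one]; ring
    have hQ1 : 0 < Q 1 := hQ 1 le_rfl hN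
    have hR1 : R 1 = Q 1 := by simp [hRdef]
    have hSb1 : pathEnc N Q E (bPt Q E 1) = -Q 1 := by
      have := pe_down N Q E (c := 0) (d := bPt Q E 1) (by rw [hb1]; exact hQ1.le)
        (fun y hy => ivl_subset N Q E le_rfl hN ⟨by rw [aPt_one]; exact hy.1.le, hy.2.le⟩)
      rw [this, hb1, S0]
      ring
    constructor
    · refine ⟨0, by rw [Set.mem_Iic, hb1]; exact hQ1.le, ?_⟩
      rw [S0, hSb1, hR1]; ring
    · rintro z ⟨y, hy, rfl⟩
      rw [Set.mem_Iic] at hy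
      rw [hSb1, hR1]
      rcases le_or_gt y 0 with hy0 | hy0
      · have := pe_up N Q E (c := y) (d := 0) hy0
          (fun z hz hball => neg_disjoint N Q E hQ0 hE0 z hz hy0 hball)
        rw [S0] at this
        linarith
      · have hyb : y ≤ bPt Q E 1 := hy
        have := pe_down N Q E (c := 0) (d := y) hy0.le
          (fun z hz => ivl_subset N Q E le_rfl hN
            ⟨by rw [aPt_one]; exact hz.1.le, le_trans hz.2.le hyb⟩)
        rw [S0] at this
        rw [this]
        linarith
  | succ n hn1 ih =>
    intro hn1N
    have hnN : n ≤ N := by omega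
    have hnN1 : n ≤ N - 1 := by omega
    have IH := ih hnN
    have ha : aPt Q E (n + 1) = bPt Q E n + E n := aPt_succ Q E n hn1
    have hb : bPt Q E (n + 1) = aPt Q E (n + 1) + Q (n + 1) := rfl
    have hEn : 0 ≤ E n := hE0 n hn1 hnN1
    have hQn1 : 0 ≤ Q (n + 1) := hQ0 (n + 1) (by omega) hn1N
    have hba : bPt Q E n ≤ aPt Q E (n + 1) := by rw [ha]; linarith
    have hab : aPt Q E (n + 1) ≤ bPt Q E (n + 1) := by rw [hb]; linarith
    have hSa : pathEnc N Q E (aPt Q E (n + 1)) = pathEnc N Q E (bPt Q E n) + E n := by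
      have := pe_up N Q E hba (gap_disjoint N Q E hQ0 hE0 hn1 hnN1)
      rw [this, ha]; ring
    have hSb : pathEnc N Q E (bPt Q E (n + 1))
        = pathEnc N Q E (aPt Q E (n + 1)) - Q (n + 1) := by
      have := pe_down N Q E hab
        (fun y hy => ivl_subset N Q E (by omega) hn1N ⟨hy.1.le, hy.2.le⟩)
      rw [this, hb]; ring
    have hTQn : TQ n = min (R n) (E n) := hTQ n hn1 hnN1
    have hRsucc : R (n + 1) = R n + Q (n + 1) - min (R n) (E n) := by
      have hsplitT : ∑ x ∈ Finset.Icc 1 n, TQ x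
          = ∑ x ∈ Finset.Icc 1 (n - 1), TQ x + TQ n := by
        obtain ⟨j, rfl⟩ : ∃ j, n = j + 1 := ⟨n - 1, by omega⟩
        simp only [Nat.add_sub_cancel]
        exact Finset.sum_Icc_succ_top (by omega) TQ
      simp only [hRdef, Nat.add_sub_cancel]
      rw [Finset.sum_Icc_succ_top (by omega : 1 ≤ n + 1) Q, hsplitT, hTQ n hn1 hnN1]
      ring
    have hmaxid : pathEnc N Q E (bPt Q E (n + 1)) + R (n + 1)
        = max (pathEnc N Q E (bPt Q E n) + R n) (pathEnc N Q E (aPt Q E (n + 1))) := by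
      rw [hSb, hSa, hRsucc]
      have hmm := min_add_max (R n) (E n)
      rw [show max (pathEnc N Q E (bPt Q E n) + R n) (pathEnc N Q E (bPt Q E n) + E n)
          = pathEnc N Q E (bPt Q E n) + max (R n) (E n) from max_add_add_left _ _ _]
      linarith
    constructor
    · rw [hmaxid]
      rcases max_cases (pathEnc N Q E (bPt Q E n) + R n)
          (pathEnc N Q E (aPt Q E (n + 1))) with ⟨hm, _⟩ | ⟨hm, _⟩ <;> rw [hm]
      · obtain ⟨y, hy, hyS⟩ := IH.1
        exact ⟨y, le_trans hy (le_trans hba hab), hyS⟩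
      · exact ⟨aPt Q E (n + 1), hab, rfl⟩
    · rintro z ⟨y, hy, rfl⟩
      rw [Set.mem_Iic] at hy
      rw [hmaxid]
      rcases le_or_gt y (bPt Q E n) with hyb | hyb
      · exact le_trans (IH.2 ⟨y, hyb, rfl⟩) (le_max_left _ _)
      · rcases le_or_gt y (aPt Q E (n + 1)) with hya | hya
        · have hup := pe_up N Q E hyb.le
            (fun z hz => gap_disjoint N Q E hQ0 hE0 hn1 hnN1 z ⟨hz.1, lt_of_lt_of_le hz.2 hya⟩)
          rw [hup]
          refine le_trans ?_ (le_max_right _ _)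
          rw [hSa]
          have : y - bPt Q E n ≤ E n := by rw [ha] at hya; linarith
          linarith
        · have hdn := pe_down N Q E hya.le
            (fun z hz => ivl_subset N Q E (by omega) hn1N ⟨hz.1.le, le_trans hz.2.le hy⟩)
          rw [hdn]
          refine le_trans ?_ (le_max_right _ _)
          linarith [hya.le]
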